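/- Let $h(x) = -x \log_2 x - (1-x)\log_2(1-x)$ for $x \in (0,1)$ with $h(0)=h(1)=0$, and define $E(x) = h\left(\frac{1+\sqrt{1-x}}{2}\right)$ for $x \in [0,1]$. Then $E^2$ is superadditive on $[0,1]$: for all $x, y \geq 0$ with $x + y \leq 1$, $E(x+y)^2 \geq E(x)^2 + E(y)^2$. -/

import Mathlib

/-- The Shannon binary entropy `h(x) = -x log₂ x - (1-x) log₂(1-x)`.
(With Mathlib's convention `log 0 = 0`, this automatically satisfies
`h 0 = 0` and `h 1 = 0`.) -/
noncomputable def binaryEntropy (x : ℝ) : ℝ :=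
  -x * Real.logb 2 x - (1 - x) * Real.logb 2 (1 - x)

/-- Entanglement of formation as a function of the squared concurrence:
`E(x) = h((1 + √(1-x))/2)`. -/
noncomputable def eofOfSqConc (x : ℝ) : ℝ :=
  binaryEntropy ((1 + Real.sqrt (1 - x)) / 2)

open Real Set Filter Topology

noncomputable def Fc (t : ℝ) : ℝ :=
  (1 - t^2)/t * (Real.log (1+t) - Real.log (1-t)) + (1+t)*Real.log (1+t)
    + (1-t)*Real.log (1-t) - 2*Real.log 2

lemma log_ineq {t : ℝ} (ht0 : 0 ≤ t) (ht1 : t < 1) :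
    2*t ≤ Real.log (1+t) - Real.log (1-t) := by
  have key : MonotoneOn (fun s : ℝ => Real.log (1+s) - Real.log (1-s) - 2*s) (Ico 0 1) := by
    have hd : ∀ s ∈ interior (Ico (0:ℝ) 1), HasDerivAt
        (fun s : ℝ => Real.log (1+s) - Real.log (1-s) - 2*s)
        (1/(1+s) - (-1)/(1-s) - 2) s := by
      intro s hs
      rw [interior_Ico] at hs
      have h1 : (1:ℝ)+s ≠ 0 := by nlinarith [hs.1, hs.2]
      have h2 : (1:ℝ)-s ≠ 0 := by nlinarith [hs.1, hs.2]
      have d1 : HasDerivAt (fun s : ℝ => Real.log (1+s)) (1/(1+s)) s := by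
        simpa using (((hasDerivAt_id s).const_add 1).log h1)
      have d2 : HasDerivAt (fun s : ℝ => Real.log (1-s)) ((-1)/(1-s)) s := by
        simpa using (((hasDerivAt_id s).const_sub 1).log h2)
      exact ((d1.sub d2).sub ((hasDerivAt_id s).const_mul 2)).congr_deriv (by ring)
    apply monotoneOn_of_deriv_nonneg (convex_Ico 0 1)
    · apply ContinuousOn.sub (ContinuousOn.sub ?_ ?_) (by fun_prop)
      · apply ContinuousOn.log (by fun_prop)
        intro s hs; nlinarith [hs.1, hs.2]
      · apply ContinuousOn.log (by fun_prop)
        intro s hs; nlinarith [hs.1, hs.2]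
    · intro s hs; exact (hd s hs).differentiableAt.differentiableWithinAt
    · intro s hs
      rw [(hd s hs).deriv]
      rw [interior_Ico] at hs
      have h1 : (0:ℝ) < 1+s := by nlinarith [hs.1, hs.2]
      have h2 : (0:ℝ) < 1-s := by nlinarith [hs.2]
      have : 1/(1+s) - (-1)/(1-s) - 2 = (2*s^2)/((1+s)*(1-s)) := by
        field_simp; ring
      rw [this]
      positivity
  have h0 : (0:ℝ) ∈ Ico (0:ℝ) 1 := by constructor <;> norm_num
  have ht : t ∈ Ico (0:ℝ) 1 := ⟨ht0, ht1⟩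
  have := key h0 ht ht0
  simp at this
  linarith

lemma Fc_hasDerivAt {t : ℝ} (ht : t ∈ Ioo (0:ℝ) 1) :
    HasDerivAt Fc (2/t - (Real.log (1+t) - Real.log (1-t))/t^2) t := by
  obtain ⟨ht0, ht1⟩ := ht
  have h1 : (0:ℝ) < 1+t := by linarith
  have h2 : (0:ℝ) < 1-t := by linarith
  have d1 : HasDerivAt (fun s : ℝ => Real.log (1+s)) (1/(1+t)) t := by
    simpa using (((hasDerivAt_id t).const_add 1).log h1.ne')
  have d2 : HasDerivAt (fun s : ℝ => Real.log (1-s)) ((-1)/(1-t)) t := by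
    simpa using (((hasDerivAt_id t).const_sub 1).log h2.ne')
  have dL : HasDerivAt (fun s : ℝ => Real.log (1+s) - Real.log (1-s))
      (1/(1+t) - (-1)/(1-t)) t := d1.sub d2
  have dA : HasDerivAt (fun s : ℝ => (1 - s^2)/s)
      ((-(2*t) * t - (1 - t^2) * 1)/t^2) t := by
    exact (((hasDerivAt_pow 2 t).const_sub 1).div (hasDerivAt_id t) ht0.ne').congr_deriv
      (by simp only [id]; norm_num)
  have dG1 : HasDerivAt (fun s : ℝ => (1+s)*Real.log (1+s))
      (1 * Real.log (1+t) + (1+t) * (1/(1+t))) t :=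
    (((hasDerivAt_id t).const_add 1)).mul d1
  have dG2 : HasDerivAt (fun s : ℝ => (1-s)*Real.log (1-s))
      ((-1) * Real.log (1-t) + (1-t) * ((-1)/(1-t))) t :=
    (((hasDerivAt_id t).const_sub 1)).mul d2
  have := (((dA.mul dL).add dG1).add dG2).sub_const (2*Real.log 2)
  refine this.congr_deriv (Eq.symm ?_)
  have e1 : (1+t) * (1/(1+t)) = 1 := by field_simp
  have e2 : (1-t) * ((-1)/(1-t)) = -1 := by field_simp
  rw [e1, e2]
  field_simp
  ring

lemma Fc_anti : AntitoneOn Fc (Ioo (0:ℝ) 1) := by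
  apply antitoneOn_of_deriv_nonpos (convex_Ioo 0 1)
  · intro s hs
    exact (Fc_hasDerivAt hs).continuousAt.continuousWithinAt
  · intro s hs
    rw [interior_Ioo] at hs
    exact (Fc_hasDerivAt hs).differentiableAt.differentiableWithinAt
  · intro s hs
    rw [interior_Ioo] at hs
    rw [(Fc_hasDerivAt hs).deriv]
    have hL := log_ineq hs.1.le hs.2
    have hs0 := hs.1
    rw [sub_nonpos, div_le_div_iff₀ hs0 (by positivity)]
    nlinarith

lemma Fc_tendsto : Tendsto Fc (𝓝[<] (1:ℝ)) (𝓝 0) := by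
  set Fext : ℝ → ℝ := fun t => (1 - t^2)/t * Real.log (1+t)
      - (1+t)/t * ((1-t)*Real.log (1-t)) + (1+t)*Real.log (1+t)
      + (1-t)*Real.log (1-t) - 2*Real.log 2 with hFext
  have hcont : ContinuousAt Fext 1 := by
    have hml : Continuous fun s : ℝ => (1-s) * Real.log (1-s) := by
      have : Continuous ((fun y : ℝ => y * Real.log y) ∘ (fun s : ℝ => 1 - s)) :=
        (Real.continuous_mul_log).comp (continuous_const.sub continuous_id)
      exact this
    apply ContinuousAt.sub ?_ continuousAt_const
    apply ContinuousAt.add (ContinuousAt.add (ContinuousAt.sub ?_ ?_) ?_) hml.continuousAt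
    · exact (ContinuousAt.div (by fun_prop) continuousAt_id one_ne_zero).mul
        ((Real.continuousAt_log (by norm_num)).comp (by fun_prop))
    · exact (ContinuousAt.div (by fun_prop) continuousAt_id one_ne_zero).mul
        hml.continuousAt
    · exact (by fun_prop : ContinuousAt (fun s : ℝ => 1+s) 1).mul
        ((Real.continuousAt_log (by norm_num)).comp (by fun_prop))
  have hval : Fext 1 = 0 := by
    have : (1:ℝ) + 1 = 2 := by norm_num
    simp [hFext, this]
  have heq : Fc =ᶠ[𝓝[<] (1:ℝ)] Fext := by
    filter_upwards [Ioo_mem_nhdsLT_of_mem (by norm_num : (1:ℝ) ∈ Ioc (0:ℝ) 1)] with s hs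
    have hs0 : s ≠ 0 := ne_of_gt hs.1
    unfold Fc
    rw [hFext]
    field_simp
    ring
  refine Tendsto.congr' heq.symm ?_
  have := hcont.continuousWithinAt (s := Iio (1:ℝ))
  rw [ContinuousWithinAt, hval] at this
  exact this

lemma Fc_nonneg {t : ℝ} (ht : t ∈ Ioo (0:ℝ) 1) : 0 ≤ Fc t := by
  apply le_of_tendsto Fc_tendsto
  filter_upwards [Ioo_mem_nhdsLT_of_mem (⟨ht.2, le_refl 1⟩ : (1:ℝ) ∈ Ioc t 1)] with s hs
  exact Fc_anti ht ⟨ht.1.trans hs.1, hs.2⟩ hs.1.le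

lemma binaryEntropy_eq (x : ℝ) : binaryEntropy x = Real.binEntropy x / Real.log 2 := by
  unfold binaryEntropy Real.binEntropy Real.logb
  rw [Real.log_inv, Real.log_inv]
  ring

lemma eof_continuous : Continuous eofOfSqConc := by
  have : eofOfSqConc = fun x => Real.binEntropy ((1 + Real.sqrt (1 - x)) / 2) / Real.log 2 := by
    funext x; rw [eofOfSqConc, binaryEntropy_eq]
  rw [this]
  apply Continuous.div_const
  exact Real.binEntropy_continuous.comp (by fun_prop)

lemma eof_zero : eofOfSqConc 0 = 0 := by
  unfold eofOfSqConc binaryEntropy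
  norm_num

lemma sqrt_mem {x : ℝ} (hx : x ∈ Ioo (0:ℝ) 1) : Real.sqrt (1 - x) ∈ Ioo (0:ℝ) 1 := by
  constructor
  · exact Real.sqrt_pos.mpr (by linarith [hx.2])
  · have : Real.sqrt (1-x) < Real.sqrt 1 :=
      Real.sqrt_lt_sqrt (by linarith [hx.2]) (by linarith [hx.1])
    simpa using this

lemma eof_eq {x : ℝ} (hx : x ∈ Ioo (0:ℝ) 1) :
    eofOfSqConc x = (2*Real.log 2 - ((1 + Real.sqrt (1-x))*Real.log (1 + Real.sqrt (1-x))
      + (1 - Real.sqrt (1-x))*Real.log (1 - Real.sqrt (1-x)))) / (2*Real.log 2) := by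
  obtain ⟨ht0, ht1⟩ := sqrt_mem hx
  set t := Real.sqrt (1-x)
  rw [eofOfSqConc, binaryEntropy_eq, Real.binEntropy]
  rw [show (1 - (1+t)/2) = (1-t)/2 by ring]
  rw [Real.log_inv, Real.log_inv, Real.log_div (by linarith) two_ne_zero,
    Real.log_div (by linarith) two_ne_zero]
  have hl2 : Real.log 2 ≠ 0 := by positivity
  field_simp
  ring

lemma eof_hasDerivAt {x : ℝ} (hx : x ∈ Ioo (0:ℝ) 1) :
    HasDerivAt eofOfSqConc
      ((Real.log (1 + Real.sqrt (1-x)) - Real.log (1 - Real.sqrt (1-x)))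
        / (4 * Real.sqrt (1-x) * Real.log 2)) x := by
  obtain ⟨ht0, ht1⟩ := sqrt_mem hx
  set t := Real.sqrt (1-x) with htdef
  have hEfun : eofOfSqConc = fun y => Real.binEntropy ((1 + Real.sqrt (1 - y)) / 2) / Real.log 2 := by
    funext y; rw [eofOfSqConc, binaryEntropy_eq]
  have dsq : HasDerivAt (fun y : ℝ => Real.sqrt (1 - y)) (1 / (2*t) * (-1)) x := by
    exact (Real.hasDerivAt_sqrt (by nlinarith [hx.2] : (1:ℝ) - x ≠ 0)).comp x
      ((hasDerivAt_id x).const_sub 1)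
  have du : HasDerivAt (fun y : ℝ => (1 + Real.sqrt (1 - y)) / 2) (1 / (2*t) * (-1) / 2) x :=
    (dsq.const_add 1).div_const 2
  have hu0 : (1 + t)/2 ≠ 0 := by positivity
  have hu1 : (1 + t)/2 ≠ 1 := by intro h; nlinarith [h]
  have dB : HasDerivAt Real.binEntropy
      (Real.log (1 - (1+t)/2) - Real.log ((1+t)/2)) ((1+t)/2) :=
    Real.hasDerivAt_binEntropy hu0 hu1
  have dC := (dB.comp x du).div_const (Real.log 2)
  simp only [Function.comp] at dC
  rw [← hEfun] at dC
  refine dC.congr_deriv (Eq.symm ?_)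
  rw [show (1 - (1+t)/2) = (1-t)/2 by ring]
  rw [Real.log_div (by linarith) two_ne_zero, Real.log_div (by linarith) two_ne_zero]
  have hl2 : Real.log 2 ≠ 0 := by positivity
  rw [div_eq_iff (by positivity : (4:ℝ)*t*Real.log 2 ≠ 0)]
  field_simp
  ring

lemma eof_key {x : ℝ} (hx : x ∈ Ioo (0:ℝ) 1) :
    eofOfSqConc x ≤ 2 * x * ((Real.log (1 + Real.sqrt (1-x)) - Real.log (1 - Real.sqrt (1-x)))
        / (4 * Real.sqrt (1-x) * Real.log 2)) := by
  obtain ⟨ht0, ht1⟩ := sqrt_mem hx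
  set t := Real.sqrt (1-x) with htdef
  have ht2 : t^2 = 1 - x := Real.sq_sqrt (by linarith [hx.2])
  have hl2 : (0:ℝ) < Real.log 2 := Real.log_pos (by norm_num)
  have hF := Fc_nonneg (⟨ht0, ht1⟩ : t ∈ Ioo (0:ℝ) 1)
  rw [eof_eq hx, ← htdef]
  rw [div_le_iff₀ (by positivity)]
  have hFc : t * Fc t = (1 - t^2) * (Real.log (1+t) - Real.log (1-t))
      + t * ((1+t)*Real.log (1+t) + (1-t)*Real.log (1-t)) - 2*t*Real.log 2 := by
    rw [Fc]; field_simp; ring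
  have htF : 0 ≤ t * Fc t := mul_nonneg ht0.le hF
  rw [hFc] at htF
  have hx' : x = 1 - t^2 := by linarith [ht2]
  rw [show 2 * x * ((Real.log (1+t) - Real.log (1-t)) / (4 * t * Real.log 2)) * (2*Real.log 2)
      = x * (Real.log (1+t) - Real.log (1-t)) / t by field_simp; ring]
  rw [le_div_iff₀ ht0]
  rw [← hx'] at htF
  linarith

lemma eof_nonneg {x : ℝ} (hx0 : 0 ≤ x) (hx1 : x ≤ 1) : 0 ≤ eofOfSqConc x := by
  rw [eofOfSqConc, binaryEntropy_eq]
  apply div_nonneg _ (Real.log_nonneg (by norm_num))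
  apply Real.binEntropy_nonneg
  · positivity
  · have h1 : Real.sqrt (1-x) ≤ Real.sqrt 1 := Real.sqrt_le_sqrt (by linarith)
    rw [Real.sqrt_one] at h1
    linarith
  
lemma g_mono : MonotoneOn (fun x => eofOfSqConc x ^ 2 / x) (Ioc (0:ℝ) 1) := by
  have hderiv : ∀ x ∈ Ioo (0:ℝ) 1, HasDerivAt (fun x => eofOfSqConc x ^ 2 / x)
      ((2 * eofOfSqConc x ^ 1 *
        ((Real.log (1 + Real.sqrt (1-x)) - Real.log (1 - Real.sqrt (1-x)))
          / (4 * Real.sqrt (1-x) * Real.log 2)) * x - eofOfSqConc x ^ 2 * 1) / x ^ 2) x := by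
    intro x hx
    exact ((eof_hasDerivAt hx).pow 2).div (hasDerivAt_id x) hx.1.ne'
  apply monotoneOn_of_deriv_nonneg (convex_Ioc 0 1)
  · exact ((eof_continuous.pow 2).continuousOn).div continuousOn_id
      (fun x hx => hx.1.ne')
  · intro x hx
    rw [interior_Ioc] at hx
    exact (hderiv x hx).differentiableAt.differentiableWithinAt
  · intro x hx
    rw [interior_Ioc] at hx
    rw [(hderiv x hx).deriv]
    apply div_nonneg _ (by positivity)
    have hE0 : 0 ≤ eofOfSqConc x := eof_nonneg hx.1.le hx.2.le
    have hkey := eof_key hx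
    set D := (Real.log (1 + Real.sqrt (1-x)) - Real.log (1 - Real.sqrt (1-x)))
          / (4 * Real.sqrt (1-x) * Real.log 2)
    have : 2 * eofOfSqConc x ^ 1 * D * x - eofOfSqConc x ^ 2 * 1
        = eofOfSqConc x * (2 * x * D - eofOfSqConc x) := by ring
    rw [this]
    exact mul_nonneg hE0 (by linarith)

/-- `E²` is superadditive on `[0,1]`: `E(x+y)² ≥ E(x)² + E(y)²`. -/
theorem sq_eofOfSqConc_superadditive :
    ∀ x y : ℝ, 0 ≤ x → 0 ≤ y → x + y ≤ 1 →
      eofOfSqConc x ^ 2 + eofOfSqConc y ^ 2 ≤ eofOfSqConc (x + y) ^ 2 := by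
  intro x y hx hy hxy
  rcases eq_or_lt_of_le hx with hx0 | hx0
  · rw [← hx0, eof_zero, zero_add]; norm_num
  rcases eq_or_lt_of_le hy with hy0 | hy0
  · rw [← hy0, eof_zero, add_zero]; norm_num
  have hs0 : 0 < x + y := by linarith
  have hxm : x ∈ Ioc (0:ℝ) 1 := ⟨hx0, by linarith⟩
  have hym : y ∈ Ioc (0:ℝ) 1 := ⟨hy0, by linarith⟩
  have hsm : x + y ∈ Ioc (0:ℝ) 1 := ⟨hs0, hxy⟩
  have h1 := g_mono hxm hsm (by linarith)
  have h2 := g_mono hym hsm (by linarith)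
  rw [div_le_div_iff₀ hx0 hs0] at h1
  rw [div_le_div_iff₀ hy0 hs0] at h2
  have : (eofOfSqConc x ^ 2 + eofOfSqConc y ^ 2) * (x + y)
      ≤ eofOfSqConc (x+y) ^ 2 * (x + y) := by nlinarith
  exact le_of_mul_le_mul_right this hs0
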